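/- Over any field K of characteristic 0 and any t ∈ K, the 3×5 matrix M₂(t) = [[t+1, 0, 1−t², 1−t⁴, 0], [−1, t²+1, t−1, 0, 1−t⁴], [0, −1, 0, t−1, t²−1]] has rank exactly 2. -/
import Mathlib


/-- The symbol matrix `M₂(t)` of `∂₂` for the circulant digraph `C⃗ₙ^{1,2,4}` has rank
exactly `2` for every `t` in a field of characteristic `0`. -/
theorem rank_M2_symbol_124 (K : Type) [Field K] [CharZero K] (t : K) :
    (!![t + 1, 0, 1 - t ^ 2, 1 - t ^ 4, 0;
        -1, t ^ 2 + 1, t - 1, 0, 1 - t ^ 4;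
        0, -1, 0, t - 1, t ^ 2 - 1] : Matrix (Fin 3) (Fin 5) K).rank = 2 := by
  set M : Matrix (Fin 3) (Fin 5) K :=
    !![t + 1, 0, 1 - t ^ 2, 1 - t ^ 4, 0;
        -1, t ^ 2 + 1, t - 1, 0, 1 - t ^ 4;
        0, -1, 0, t - 1, t ^ 2 - 1] with hM
  set A : Matrix (Fin 3) (Fin 2) K :=
    !![-(t+1), -((t+1)*(t^2+1)); 1, 0; 0, 1] with hA
  set B : Matrix (Fin 2) (Fin 5) K :=
    !![-1, t ^ 2 + 1, t - 1, 0, 1 - t ^ 4;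
       0, -1, 0, t - 1, t ^ 2 - 1] with hB
  -- Upper bound: M factors through K².
  have hub : M.rank ≤ 2 := by
    have hfact : M = A * B := by
      rw [hM, hA, hB]
      ext i j
      fin_cases i <;> fin_cases j <;>
        simp [Matrix.mul_apply, Fin.sum_univ_succ] <;> ring
    calc M.rank ≤ A.rank := by rw [hfact]; exact Matrix.rank_mul_le_left _ _
      _ ≤ 2 := by simpa using Matrix.rank_le_card_width A
  -- Lower bound: an invertible 2×2 submatrix, realized as C * M * D.
  have hlb : 2 ≤ M.rank := by
    set C : Matrix (Fin 2) (Fin 3) K := !![0, 1, 0; 0, 0, 1] with hC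
    set D : Matrix (Fin 5) (Fin 2) K := !![1, 0; 0, 1; 0, 0; 0, 0; 0, 0] with hD
    set S : Matrix (Fin 2) (Fin 2) K := !![-1, t ^ 2 + 1; 0, -1] with hSdef
    have hS : C * M * D = S := by
      rw [hC, hM, hD, hSdef]
      ext i j
      fin_cases i <;> fin_cases j <;>
        simp [Matrix.mul_apply, Fin.sum_univ_succ]
    have hunit : IsUnit S := by
      rw [Matrix.isUnit_iff_isUnit_det, hSdef]
      simp [Matrix.det_fin_two]
    have h2 : S.rank = 2 := by
      simpa using Matrix.rank_of_isUnit S hunit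
    calc (2 : ℕ) = (C * M * D).rank := by rw [hS, h2]
      _ ≤ (C * M).rank := Matrix.rank_mul_le_left _ _
      _ ≤ M.rank := Matrix.rank_mul_le_right _ _
  omega
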